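/- arXiv:1712.09626 — 2 statements merged into one kernel-verified Lean document; each statement's English description precedes it below -/
import Mathlib

section
/- For n ≥ 2, the set { s_i s_{i+1} ⋯ s_{n−1} a_n^ε : 1 ≤ i ≤ n, ε ∈ {0,1} } (with the convention that for i = n the element is a_n^ε) is a complete set of left coset representatives of the subgroup B̂_{n−1} in the twisted hyperoctahedral group B̂_n. -/
/-- Generators of the twisted hyperoctahedral group `B̂_n`: the central element
`z`, the Clifford-type generators `a i` (`0 ≤ i < n`) and the Coxeter generators
`s i` (`0 ≤ i < n-1`, with `s i` exchanging `i` and `i+1`); generators with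
out-of-range indices are killed by relations. -/
inductive BGen : Type
  | z : BGen
  | a : ℕ → BGen
  | s : ℕ → BGen

open FreeGroup in
/-- The defining relations of `B̂_n = Cl_n ⋊ S_n`. -/
inductive BRel (n : ℕ) : FreeGroup BGen → Prop
  | zsq : BRel n (of .z * of .z)
  | zcentral (g : BGen) : BRel n (of .z * of g * (of .z)⁻¹ * (of g)⁻¹)
  | asq (i : ℕ) (h : i < n) : BRel n (of (.a i) * of (.a i) * (of .z)⁻¹)
  | aswap (i j : ℕ) (hij : i ≠ j) (hi : i < n) (hj : j < n) :
      BRel n (of (.a i) * of (.a j) * (of .z * of (.a j) * of (.a i))⁻¹)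
  | ssq (i : ℕ) (h : i + 1 < n) : BRel n (of (.s i) * of (.s i))
  | braid (i : ℕ) (h : i + 2 < n) : BRel n ((of (.s i) * of (.s (i + 1))) ^ 3)
  | sfar (i j : ℕ) (h : i + 2 ≤ j) (hj : j + 1 < n) :
      BRel n (of (.s i) * of (.s j) * (of (.s i))⁻¹ * (of (.s j))⁻¹)
  | sa1 (i : ℕ) (h : i + 1 < n) :
      BRel n (of (.s i) * of (.a i) * (of (.s i))⁻¹ * (of (.a (i + 1)))⁻¹)
  | sa2 (i : ℕ) (h : i + 1 < n) :
      BRel n (of (.s i) * of (.a (i + 1)) * (of (.s i))⁻¹ * (of (.a i))⁻¹)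
  | sa3 (i j : ℕ) (h : i + 1 < n) (hj : j < n) (h1 : j ≠ i) (h2 : j ≠ i + 1) :
      BRel n (of (.s i) * of (.a j) * (of (.s i))⁻¹ * (of (.a j))⁻¹)
  | akill (i : ℕ) (h : n ≤ i) : BRel n (of (.a i))
  | skill (i : ℕ) (h : n ≤ i + 1) : BRel n (of (.s i))

/-- The twisted hyperoctahedral group `B̂_n`. -/
abbrev Bhat (n : ℕ) : Type := PresentedGroup {w | BRel n w}

/-- The central element `z` of `B̂_n`. -/
def zElt (n : ℕ) : Bhat n := PresentedGroup.of BGen.z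

/-- The generator `a i` of `B̂_n` (`a₁, …, a_n` of the paper, 0-indexed). -/
def aElt (n : ℕ) (i : ℕ) : Bhat n := PresentedGroup.of (BGen.a i)

/-- The Coxeter generator `s i` of `B̂_n` (`s₁, …, s_{n-1}` of the paper,
0-indexed: `s i` exchanges `i` and `i+1`). -/
def sElt (n : ℕ) (i : ℕ) : Bhat n := PresentedGroup.of (BGen.s i)

/-- The product `s_i s_{i+1} ⋯ s_{m-1}` (0-indexed). -/
def sProd (n : ℕ) (i m : ℕ) : Bhat n :=
  ((List.range (m - i)).map fun d => sElt n (i + d)).prod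


/-- The subgroup `B̂_{n-1} ⊆ B̂_n`, generated by `z`, `a₁, …, a_{n-1}` and
`s₁, …, s_{n-2}` (0-indexed: `a i` for `i < n-1` and `s i` for `i+1 < n-1`). -/
def BhatPrev (n : ℕ) : Subgroup (Bhat n) :=
  Subgroup.closure
    ({zElt n} ∪ {x | ∃ i, i < n - 1 ∧ x = aElt n i} ∪ {x | ∃ i, i + 1 < n - 1 ∧ x = sElt n i})

/-- The coset representative `s_i s_{i+1} ⋯ s_{n-1} a_n^ε` (0-indexed: for
`i : Fin n`, the product `s_i ⋯ s_{n-2}` times `(a_{n-1})^ε`; for `i = n-1` the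
`s`-product is empty, matching the convention for `i = n`). -/
def cosetRep (n : ℕ) (p : Fin n × Bool) : Bhat n :=
  sProd n p.1 (n - 1) * (aElt n (n - 1)) ^ (cond p.2 1 0)

namespace BhatAux

variable {n : ℕ}

lemma comm_of_rel {G : Type*} [Group G] {x y : G} (h : x * y * x⁻¹ * y⁻¹ = 1) :
    x * y = y * x := by
  rw [mul_inv_eq_one, mul_inv_eq_iff_eq_mul] at h
  exact h

lemma relOne {w : FreeGroup BGen} (h : BRel n w) :
    PresentedGroup.mk {w | BRel n w} w = 1 :=
  (QuotientGroup.eq_one_iff _).mpr (Subgroup.subset_normalClosure h)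

@[simp] lemma mk_of (g : BGen) :
    PresentedGroup.mk {w | BRel n w} (FreeGroup.of g) = PresentedGroup.of g := rfl

@[simp] lemma mk_of_z :
    PresentedGroup.mk {w | BRel n w} (FreeGroup.of BGen.z) = zElt n := rfl
@[simp] lemma mk_of_a (i : ℕ) :
    PresentedGroup.mk {w | BRel n w} (FreeGroup.of (BGen.a i)) = aElt n i := rfl
@[simp] lemma mk_of_s (i : ℕ) :
    PresentedGroup.mk {w | BRel n w} (FreeGroup.of (BGen.s i)) = sElt n i := rfl

lemma z_sq : zElt n * zElt n = 1 := by
  simpa [map_mul, zElt] using relOne (BRel.zsq (n := n))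

lemma z_comm (x : Bhat n) : zElt n * x = x * zElt n := by
  have hx : x ∈ Subgroup.centralizer {zElt n} := by
    apply PresentedGroup.generated_by
    intro j
    rw [Subgroup.mem_centralizer_iff]
    rintro y rfl
    have := relOne (BRel.zcentral (n := n) j)
    simp only [map_mul, map_inv, mk_of, mk_of_z] at this
    exact comm_of_rel this
  exact Subgroup.mem_centralizer_iff.mp hx (zElt n) rfl

lemma a_kill {i : ℕ} (h : n ≤ i) : aElt n i = 1 := by
  simpa [aElt] using relOne (BRel.akill (n := n) i h)

lemma s_kill {i : ℕ} (h : n ≤ i + 1) : sElt n i = 1 := by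
  simpa [sElt] using relOne (BRel.skill (n := n) i h)

lemma s_sq {i : ℕ} (h : i + 1 < n) : sElt n i * sElt n i = 1 := by
  simpa [map_mul, sElt] using relOne (BRel.ssq (n := n) i h)

lemma a_sq {i : ℕ} (h : i < n) : aElt n i * aElt n i = zElt n := by
  have := relOne (BRel.asq (n := n) i h)
  simp only [map_mul, map_inv, mk_of_z, mk_of_a] at this
  rwa [mul_inv_eq_one] at this

lemma a_swap {i j : ℕ} (hij : i ≠ j) (hi : i < n) (hj : j < n) :
    aElt n i * aElt n j = zElt n * (aElt n j * aElt n i) := by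
  have := relOne (BRel.aswap (n := n) i j hij hi hj)
  simp only [map_mul, map_inv, mk_of_z, mk_of_a] at this
  rw [mul_inv_eq_one] at this
  rw [this, mul_assoc]

lemma s_a_1 {i : ℕ} (h : i + 1 < n) :
    sElt n i * aElt n i = aElt n (i + 1) * sElt n i := by
  have := relOne (BRel.sa1 (n := n) i h)
  simp only [map_mul, map_inv, mk_of_z, mk_of_a, mk_of_s] at this
  rw [mul_inv_eq_one, mul_inv_eq_iff_eq_mul] at this
  exact this

lemma s_a_2 {i : ℕ} (h : i + 1 < n) :
    sElt n i * aElt n (i + 1) = aElt n i * sElt n i := by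
  have := relOne (BRel.sa2 (n := n) i h)
  simp only [map_mul, map_inv, mk_of_z, mk_of_a, mk_of_s] at this
  rw [mul_inv_eq_one, mul_inv_eq_iff_eq_mul] at this
  exact this

lemma s_a_3 {i j : ℕ} (h : i + 1 < n) (hj : j < n) (h1 : j ≠ i) (h2 : j ≠ i + 1) :
    sElt n i * aElt n j = aElt n j * sElt n i := by
  have := relOne (BRel.sa3 (n := n) i j h hj h1 h2)
  simp only [map_mul, map_inv, mk_of_z, mk_of_a, mk_of_s] at this
  exact comm_of_rel this

lemma s_far {i j : ℕ} (h : i + 2 ≤ j) (hj : j + 1 < n) :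
    sElt n i * sElt n j = sElt n j * sElt n i := by
  have := relOne (BRel.sfar (n := n) i j h hj)
  simp only [map_mul, map_inv, mk_of_s] at this
  exact comm_of_rel this

lemma braid {i : ℕ} (h : i + 2 < n) :
    sElt n i * sElt n (i + 1) * sElt n i = sElt n (i + 1) * sElt n i * sElt n (i + 1) := by
  have h1 : i + 1 < n := by omega
  have h2 : i + 1 + 1 < n := by omega
  have hb := relOne (BRel.braid (n := n) i h)
  simp only [map_pow, map_mul, mk_of_s] at hb
  rw [pow_succ, pow_succ, pow_one] at hb
  have e : sElt n i * sElt n (i + 1) * (sElt n i * sElt n (i + 1)) *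
      (sElt n i * sElt n (i + 1)) = 1 := hb
  calc sElt n i * sElt n (i + 1) * sElt n i
      = (sElt n i * sElt n (i + 1) * (sElt n i * sElt n (i + 1)) *
          (sElt n i * sElt n (i + 1))) *
          ((sElt n (i+1))⁻¹ * (sElt n i)⁻¹ * (sElt n (i+1))⁻¹) := by group
    _ = (sElt n (i+1))⁻¹ * (sElt n i)⁻¹ * (sElt n (i+1))⁻¹ := by rw [e, one_mul]
    _ = sElt n (i + 1) * sElt n i * sElt n (i + 1) := by
        rw [inv_eq_of_mul_eq_one_right (s_sq h1), inv_eq_of_mul_eq_one_right (s_sq h2)]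

end BhatAux
namespace BhatAux

variable {n : ℕ}

lemma sProd_eq_one {i : ℕ} (h : n - 1 ≤ i) : sProd n i (n - 1) = 1 := by
  unfold sProd
  rw [Nat.sub_eq_zero_of_le h]
  simp

lemma sProd_succ {i : ℕ} (h : i < n - 1) :
    sProd n i (n - 1) = sElt n i * sProd n (i + 1) (n - 1) := by
  unfold sProd
  have h1 : n - 1 - i = (n - 1 - (i + 1)) + 1 := by omega
  rw [h1, List.range_succ_eq_map, List.map_cons, List.prod_cons, List.map_map]
  have h2 : ((fun d => sElt n (i + d)) ∘ Nat.succ) = fun d => sElt n (i + 1 + d) := by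
    funext d
    simp only [Function.comp_apply]
    congr 1
    omega
  rw [h2, Nat.add_zero]

lemma s_comm_P {j i : ℕ} (hji : j + 2 ≤ i) (hj : j + 1 < n) :
    sElt n j * sProd n i (n - 1) = sProd n i (n - 1) * sElt n j := by
  by_cases h : i < n - 1
  · rw [sProd_succ h, ← mul_assoc, s_far hji (by omega), mul_assoc,
      s_comm_P (by omega : j + 2 ≤ i + 1) hj, ← mul_assoc]
  · rw [sProd_eq_one (by omega), one_mul, mul_one]
termination_by n - 1 - i

lemma s_shift_P {i j : ℕ} (hij : i < j) (hjn : j ≤ n - 2) (hn : 2 ≤ n) :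
    sElt n j * sProd n i (n - 1) = sProd n i (n - 1) * sElt n (j - 1) := by
  rcases Nat.lt_or_ge (i + 1) j with h2 | h2
  · have hi : i < n - 1 := by omega
    rw [sProd_succ hi, ← mul_assoc, ← s_far (by omega : i + 2 ≤ j) (by omega : j + 1 < n),
      mul_assoc, s_shift_P (by omega) hjn hn, ← mul_assoc]
  · have hj : j = i + 1 := by omega
    subst hj
    have hi : i < n - 1 := by omega
    have hi1 : i + 1 < n - 1 := by omega
    have hb : i + 2 < n := by omega
    rw [sProd_succ hi, sProd_succ hi1, Nat.add_sub_cancel]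
    calc sElt n (i + 1) * (sElt n i * (sElt n (i + 1) * sProd n (i + 2) (n - 1)))
        = (sElt n (i + 1) * sElt n i * sElt n (i + 1)) * sProd n (i + 2) (n - 1) := by
          rw [mul_assoc, mul_assoc]
      _ = (sElt n i * sElt n (i + 1) * sElt n i) * sProd n (i + 2) (n - 1) := by
          rw [← braid hb]
      _ = sElt n i * sElt n (i + 1) * (sElt n i * sProd n (i + 2) (n - 1)) := by
          rw [mul_assoc]
      _ = sElt n i * sElt n (i + 1) * (sProd n (i + 2) (n - 1) * sElt n i) := by
          rw [s_comm_P (le_refl (i + 2)) (by omega)]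
      _ = sElt n i * (sElt n (i + 1) * sProd n (i + 2) (n - 1)) * sElt n i := by
          rw [mul_assoc, mul_assoc, mul_assoc]
termination_by j - i

lemma a_comm_P {j i : ℕ} (hji : j < i) :
    aElt n j * sProd n i (n - 1) = sProd n i (n - 1) * aElt n j := by
  by_cases h : i < n - 1
  · rw [sProd_succ h, ← mul_assoc,
      ← s_a_3 (by omega) (by omega) (by omega) (by omega),
      mul_assoc, a_comm_P (by omega : j < i + 1), ← mul_assoc]
  · rw [sProd_eq_one (by omega), one_mul, mul_one]
termination_by n - 1 - i

lemma a_top_P {i : ℕ} (hi : i ≤ n - 1) :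
    aElt n i * sProd n i (n - 1) = sProd n i (n - 1) * aElt n (n - 1) := by
  by_cases h : i < n - 1
  · rw [sProd_succ h, ← mul_assoc, ← s_a_2 (by omega), mul_assoc,
      a_top_P (by omega : i + 1 ≤ n - 1), ← mul_assoc]
  · have : i = n - 1 := by omega
    subst this
    rw [sProd_eq_one le_rfl, one_mul, mul_one]
termination_by n - 1 - i

lemma a_shift_P {i j : ℕ} (hij : i < j) (hjn : j ≤ n - 1) :
    aElt n j * sProd n i (n - 1) = sProd n i (n - 1) * aElt n (j - 1) := by
  have hi : i < n - 1 := by omega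
  rcases Nat.lt_or_ge (i + 1) j with h2 | h2
  · rw [sProd_succ hi, ← mul_assoc,
      ← s_a_3 (by omega) (by omega) (by omega) (by omega),
      mul_assoc, a_shift_P (by omega : i + 1 < j) hjn, ← mul_assoc]
  · have hj : j = i + 1 := by omega
    subst hj
    rw [sProd_succ hi, Nat.add_sub_cancel, ← mul_assoc, ← s_a_1 (by omega),
      mul_assoc, a_comm_P (by omega : i < i + 1), ← mul_assoc]
termination_by j - i

lemma s_mul_sProd_self {i : ℕ} (hi : i < n - 1) :
    sElt n i * sProd n i (n - 1) = sProd n (i + 1) (n - 1) := by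
  rw [sProd_succ hi, ← mul_assoc, s_sq (by omega), one_mul]

lemma z_mem : zElt n ∈ BhatPrev n :=
  Subgroup.subset_closure (Or.inl (Or.inl rfl))

lemma a_mem {i : ℕ} (h : i < n - 1) : aElt n i ∈ BhatPrev n :=
  Subgroup.subset_closure (Or.inl (Or.inr ⟨i, h, rfl⟩))

lemma s_mem {i : ℕ} (h : i + 1 < n - 1) : sElt n i ∈ BhatPrev n :=
  Subgroup.subset_closure (Or.inr ⟨i, h, rfl⟩)

end BhatAux
namespace BhatAux

variable {n : ℕ}

lemma mk_mul_mem {G : Type*} [Group G] {H : Subgroup G} (x : G) {h : G} (hh : h ∈ H) :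
    (QuotientGroup.mk (x * h) : G ⧸ H) = QuotientGroup.mk x := by
  apply QuotientGroup.eq.2
  have : (x * h)⁻¹ * x = h⁻¹ := by group
  rw [this]
  exact inv_mem hh

lemma cosetRep_mk (i : ℕ) (hi : i < n) (ε : Bool) :
    cosetRep n (⟨i, hi⟩, ε) = sProd n i (n - 1) * aElt n (n - 1) ^ (cond ε 1 0) := rfl

lemma pow_cond_false : aElt n (n - 1) ^ (cond false 1 0) = 1 := pow_zero _

lemma pow_cond_true : aElt n (n - 1) ^ (cond true 1 0) = aElt n (n - 1) := pow_one _

/-- moving a generator across a coset representative -/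
lemma key (hn : 2 ≤ n) (g : BGen) (p : Fin n × Bool) :
    ∃ q : Fin n × Bool,
      (QuotientGroup.mk (PresentedGroup.of g * cosetRep n p) : Bhat n ⧸ BhatPrev n) =
        QuotientGroup.mk (cosetRep n q) := by
  obtain ⟨⟨i, hi⟩, ε⟩ := p
  have hi' : i ≤ n - 1 := by omega
  have hAn : n - 1 < n := by omega
  cases g with
  | z =>
    refine ⟨⟨⟨i, hi⟩, ε⟩, ?_⟩
    rw [show (PresentedGroup.of BGen.z : Bhat n) = zElt n from rfl, z_comm]
    exact mk_mul_mem _ z_mem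
  | s j =>
    rw [show (PresentedGroup.of (BGen.s j) : Bhat n) = sElt n j from rfl]
    by_cases hjn : j + 1 < n
    swap
    · rw [s_kill (by omega), one_mul]
      exact ⟨_, rfl⟩
    rcases lt_trichotomy (j + 1) i with h | h | h
    · -- j + 2 ≤ i : s j commutes with everything, lands in BhatPrev
      refine ⟨⟨⟨i, hi⟩, ε⟩, ?_⟩
      have hsA : sElt n j * aElt n (n - 1) ^ (cond ε 1 0) =
          aElt n (n - 1) ^ (cond ε 1 0) * sElt n j := by
        cases ε
        · rw [pow_cond_false, mul_one, one_mul]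
        · rw [pow_cond_true]
          exact s_a_3 hjn hAn (by omega) (by omega)
      rw [cosetRep_mk, ← mul_assoc, s_comm_P (by omega) hjn, mul_assoc, hsA, ← mul_assoc]
      exact mk_mul_mem _ (s_mem (by omega))
    · -- j + 1 = i : absorb into the product
      refine ⟨⟨⟨j, by omega⟩, ε⟩, ?_⟩
      have hj1 : j < n - 1 := by omega
      rw [cosetRep_mk, ← mul_assoc, show sElt n j * sProd n i (n - 1) = sProd n j (n - 1) by
        rw [sProd_succ hj1, ← h]]
      rfl
    · -- i ≤ j
      rcases Nat.eq_or_lt_of_le (by omega : i ≤ j) with h2 | h2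
      · -- j = i : shorten the product
        subst h2
        refine ⟨⟨⟨i + 1, by omega⟩, ε⟩, ?_⟩
        rw [cosetRep_mk, ← mul_assoc, s_mul_sProd_self (by omega)]
        rfl
      · -- i < j : shift
        obtain ⟨k, rfl⟩ : ∃ k, j = k + 1 := ⟨j - 1, by omega⟩
        refine ⟨⟨⟨i, hi⟩, ε⟩, ?_⟩
        have hsA : sElt n k * aElt n (n - 1) ^ (cond ε 1 0) =
            aElt n (n - 1) ^ (cond ε 1 0) * sElt n k := by
          cases ε
          · rw [pow_cond_false, mul_one, one_mul]
          · rw [pow_cond_true]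
            exact s_a_3 (by omega) hAn (by omega) (by omega)
        have hsh := s_shift_P (n := n) (i := i) (j := k + 1) (by omega) (by omega) hn
        rw [Nat.add_sub_cancel] at hsh
        rw [cosetRep_mk, ← mul_assoc, hsh, mul_assoc, hsA, ← mul_assoc]
        exact mk_mul_mem _ (s_mem (by omega))
  | a j =>
    rw [show (PresentedGroup.of (BGen.a j) : Bhat n) = aElt n j from rfl]
    by_cases hjn : j < n
    swap
    · rw [a_kill (by omega), one_mul]
      exact ⟨_, rfl⟩
    rcases lt_trichotomy j i with h | h | h
    · -- j < i : commutes with the product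
      refine ⟨⟨⟨i, hi⟩, ε⟩, ?_⟩
      cases ε
      · rw [cosetRep_mk, pow_cond_false, mul_one, a_comm_P h]
        exact mk_mul_mem _ (a_mem (by omega))
      · rw [cosetRep_mk, pow_cond_true, ← mul_assoc, a_comm_P h, mul_assoc,
          a_swap (show j ≠ n - 1 by omega) hjn hAn, z_comm, ← mul_assoc, ← mul_assoc]
        exact (mk_mul_mem _ z_mem).trans (mk_mul_mem _ (a_mem (by omega)))
    · -- j = i : flip ε
      subst h
      cases ε
      · refine ⟨⟨⟨j, hi⟩, true⟩, ?_⟩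
        rw [cosetRep_mk, cosetRep_mk, pow_cond_false, pow_cond_true, mul_one, a_top_P hi']
      · refine ⟨⟨⟨j, hi⟩, false⟩, ?_⟩
        rw [cosetRep_mk, cosetRep_mk, pow_cond_false, pow_cond_true, mul_one,
          ← mul_assoc, a_top_P hi', mul_assoc, a_sq hAn]
        exact mk_mul_mem _ z_mem
    · -- i < j : shift
      obtain ⟨k, rfl⟩ : ∃ k, j = k + 1 := ⟨j - 1, by omega⟩
      refine ⟨⟨⟨i, hi⟩, ε⟩, ?_⟩
      have hsh := a_shift_P (n := n) (i := i) (j := k + 1) h (by omega)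
      rw [Nat.add_sub_cancel] at hsh
      cases ε
      · rw [cosetRep_mk, pow_cond_false, mul_one, hsh]
        exact mk_mul_mem _ (a_mem (by omega))
      · rw [cosetRep_mk, pow_cond_true, ← mul_assoc, hsh, mul_assoc,
          a_swap (show k ≠ n - 1 by omega) (by omega) hAn, z_comm, ← mul_assoc, ← mul_assoc]
        exact (mk_mul_mem _ z_mem).trans (mk_mul_mem _ (a_mem (by omega)))

end BhatAux
namespace BhatAux

open Pointwise

variable {n : ℕ}

lemma surj (hn : 2 ≤ n) :
    Function.Surjective (fun p : Fin n × Bool =>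
      (QuotientGroup.mk (cosetRep n p) : Bhat n ⧸ BhatPrev n)) := by
  classical
  set C : Set (Bhat n ⧸ BhatPrev n) :=
    Set.range (fun p : Fin n × Bool =>
      (QuotientGroup.mk (cosetRep n p) : Bhat n ⧸ BhatPrev n)) with hC
  have smul_mk : ∀ (g x : Bhat n),
      g • (QuotientGroup.mk x : Bhat n ⧸ BhatPrev n) = QuotientGroup.mk (g * x) :=
    fun _ _ => rfl
  have hsub : ∀ g : BGen, (PresentedGroup.of g : Bhat n) • C ⊆ C := by
    intro g
    rintro _ ⟨c, ⟨p, rfl⟩, rfl⟩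
    obtain ⟨q, hq⟩ := key hn g p
    exact ⟨q, hq.symm⟩
  have hstab : ∀ g : BGen, (PresentedGroup.of g : Bhat n) ∈ MulAction.stabilizer (Bhat n) C := by
    intro g
    rw [MulAction.mem_stabilizer_iff]
    refine subset_antisymm (hsub g) ?_
    rw [Set.subset_smul_set_iff]
    cases g with
    | z =>
      rw [show (PresentedGroup.of BGen.z : Bhat n) = zElt n from rfl,
        inv_eq_of_mul_eq_one_right z_sq]
      exact hsub BGen.z
    | s j =>
      by_cases hj : j + 1 < n
      · rw [show (PresentedGroup.of (BGen.s j) : Bhat n) = sElt n j from rfl,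
          inv_eq_of_mul_eq_one_right (s_sq hj)]
        exact hsub (BGen.s j)
      · rw [show (PresentedGroup.of (BGen.s j) : Bhat n) = sElt n j from rfl,
          s_kill (by omega), inv_one, one_smul]
    | a j =>
      by_cases hj : j < n
      · have ha : (aElt n j)⁻¹ = aElt n j * zElt n := by
          apply inv_eq_of_mul_eq_one_right
          rw [← mul_assoc, a_sq hj, z_sq]
        rw [show (PresentedGroup.of (BGen.a j) : Bhat n) = aElt n j from rfl, ha]
        intro x hx
        rw [mul_smul] at hx
        exact hsub (BGen.a j) (Set.smul_set_mono (hsub BGen.z) hx)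
      · rw [show (PresentedGroup.of (BGen.a j) : Bhat n) = aElt n j from rfl,
          a_kill (by omega), inv_one, one_smul]
  have hall : ∀ x : Bhat n, x • C = C := fun x =>
    MulAction.mem_stabilizer_iff.mp (PresentedGroup.generated_by _ _ hstab x)
  intro c
  obtain ⟨x, rfl⟩ := QuotientGroup.mk_surjective c
  have h1 : (QuotientGroup.mk (1 : Bhat n) : Bhat n ⧸ BhatPrev n) ∈ C := by
    refine ⟨(⟨n - 1, by omega⟩, false), ?_⟩
    show (QuotientGroup.mk (cosetRep n (⟨n - 1, by omega⟩, false)) : Bhat n ⧸ BhatPrev n) = _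
    rw [show cosetRep n (⟨n - 1, by omega⟩, false) = 1 by
      rw [cosetRep_mk, pow_cond_false, mul_one, sProd_eq_one le_rfl]]
  have hmem : (QuotientGroup.mk x : Bhat n ⧸ BhatPrev n) ∈ C := by
    rw [← hall x]
    exact ⟨QuotientGroup.mk 1, h1, congrArg QuotientGroup.mk (mul_one x)⟩
  exact hmem

end BhatAux
namespace BhatAux

open Equiv

variable {n : ℕ}

/-- Sign flip at index `t`. -/
def flipPerm (t : ℕ) : Equiv.Perm (ℕ × Bool) :=
  Function.Involutive.toPerm (fun p => if p.1 = t then (p.1, !p.2) else p)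
    (by rintro ⟨k, b⟩; by_cases h : k = t <;> simp [h])

@[simp] lemma flipPerm_apply (t k : ℕ) (b : Bool) :
    flipPerm t (k, b) = if k = t then (k, !b) else (k, b) := rfl

/-- Exchange of indices `t` and `u`. -/
def swapPerm (t u : ℕ) : Equiv.Perm (ℕ × Bool) :=
  (Equiv.swap t u).prodCongr (Equiv.refl Bool)

@[simp] lemma swapPerm_apply (t u k : ℕ) (b : Bool) :
    swapPerm t u (k, b) = (Equiv.swap t u k, b) := rfl

lemma prodCongr_refl_mul (σ τ : Equiv.Perm ℕ) :
    σ.prodCongr (Equiv.refl Bool) * τ.prodCongr (Equiv.refl Bool) =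
      (σ * τ).prodCongr (Equiv.refl Bool) := by
  apply Equiv.ext
  rintro ⟨k, b⟩
  rfl

lemma prodCongr_refl_one :
    (1 : Equiv.Perm ℕ).prodCongr (Equiv.refl Bool) = 1 := by
  apply Equiv.ext
  rintro ⟨k, b⟩
  rfl

lemma prodCongr_refl_pow (σ : Equiv.Perm ℕ) (m : ℕ) :
    (σ.prodCongr (Equiv.refl Bool)) ^ m = (σ ^ m).prodCongr (Equiv.refl Bool) := by
  induction m with
  | zero => rw [pow_zero, pow_zero, prodCongr_refl_one]
  | succ m ih => rw [pow_succ, pow_succ, ih, prodCongr_refl_mul]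

lemma flip_flip (t u : ℕ) : flipPerm t * flipPerm u = flipPerm u * flipPerm t := by
  apply Equiv.ext
  rintro ⟨k, b⟩
  by_cases h1 : k = t <;> by_cases h2 : k = u <;>
    simp_all [Equiv.Perm.mul_apply]

lemma flip_sq (t : ℕ) : flipPerm t * flipPerm t = 1 := by
  apply Equiv.ext
  rintro ⟨k, b⟩
  by_cases h : k = t <;> simp [Equiv.Perm.mul_apply, h]

lemma swapPerm_sq (t u : ℕ) : swapPerm t u * swapPerm t u = 1 := by
  apply Equiv.ext
  rintro ⟨k, b⟩
  simp [Equiv.Perm.mul_apply, Equiv.swap_apply_self]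

lemma swap_three {α : Type*} [DecidableEq α] {a b c : α}
    (hab : a ≠ b) (hbc : b ≠ c) (hac : a ≠ c) :
    (Equiv.swap a b * Equiv.swap b c) ^ 3 = 1 := by
  ext k
  rw [pow_succ, pow_succ, pow_one]
  simp only [Equiv.Perm.mul_apply, Equiv.Perm.one_apply]
  by_cases k1 : k = a
  · subst k1
    simp [Equiv.swap_apply_def, hab, hbc, hac, hab.symm, hbc.symm, hac.symm]
  by_cases k2 : k = b
  · subst k2
    simp [Equiv.swap_apply_def, hab, hbc, hac, hab.symm, hbc.symm, hac.symm]
  by_cases k3 : k = c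
  · subst k3
    simp [Equiv.swap_apply_def, hab, hbc, hac, hab.symm, hbc.symm, hac.symm]
  · simp [Equiv.swap_apply_def, k1, k2, k3]

lemma swap_disjoint_comm {α : Type*} [DecidableEq α] {t u t' u' : α}
    (h1 : t ≠ t') (h2 : t ≠ u') (h3 : u ≠ t') (h4 : u ≠ u') :
    Equiv.swap t u * Equiv.swap t' u' = Equiv.swap t' u' * Equiv.swap t u := by
  ext k
  simp only [Equiv.Perm.mul_apply]
  by_cases k1 : k = t
  · subst k1
    simp [Equiv.swap_apply_def, h1, h2, h3, h4, h1.symm, h2.symm, h3.symm, h4.symm]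
  by_cases k2 : k = u
  · subst k2
    simp [Equiv.swap_apply_def, h1, h2, h3, h4, h1.symm, h2.symm, h3.symm, h4.symm]
  by_cases k3 : k = t'
  · subst k3
    simp [Equiv.swap_apply_def, h1, h2, h3, h4, h1.symm, h2.symm, h3.symm, h4.symm, k1, k2]
  by_cases k4 : k = u'
  · subst k4
    simp [Equiv.swap_apply_def, h1, h2, h3, h4, h1.symm, h2.symm, h3.symm, h4.symm, k1, k2]
  · simp [Equiv.swap_apply_def, k1, k2, k3, k4]

lemma swapPerm_flip_left {t u : ℕ} (h : t ≠ u) :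
    swapPerm t u * flipPerm t = flipPerm u * swapPerm t u := by
  apply Equiv.ext
  rintro ⟨k, b⟩
  simp only [Equiv.Perm.mul_apply, flipPerm_apply, swapPerm_apply]
  by_cases k1 : k = t
  · subst k1
    simp [Equiv.swap_apply_def, h, h.symm]
  by_cases k2 : k = u
  · subst k2
    simp [Equiv.swap_apply_def, h, h.symm, k1]
  · simp [Equiv.swap_apply_def, h, h.symm, k1, k2]

lemma swapPerm_comm (t u : ℕ) : swapPerm t u = swapPerm u t := by
  unfold swapPerm
  rw [Equiv.swap_comm]

lemma swapPerm_flip_right {t u : ℕ} (h : t ≠ u) :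
    swapPerm t u * flipPerm u = flipPerm t * swapPerm t u := by
  rw [swapPerm_comm]
  exact swapPerm_flip_left h.symm

lemma swapPerm_flip_other {t u w : ℕ} (h1 : w ≠ t) (h2 : w ≠ u) :
    swapPerm t u * flipPerm w = flipPerm w * swapPerm t u := by
  apply Equiv.ext
  rintro ⟨k, b⟩
  simp only [Equiv.Perm.mul_apply, flipPerm_apply, swapPerm_apply]
  by_cases k1 : k = t
  · subst k1
    simp [Equiv.swap_apply_def, h1, h2, h1.symm, h2.symm]
  by_cases k2 : k = u
  · subst k2
    simp [Equiv.swap_apply_def, h1, h2, h1.symm, h2.symm, k1]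
  by_cases k3 : k = w
  · subst k3
    simp [Equiv.swap_apply_def, h1, h2, k1, k2]
  · simp [Equiv.swap_apply_def, k1, k2, k3]

/-- The image of the generators in the permutation group of `ℕ × Bool`. -/
def FImg (n : ℕ) : BGen → Equiv.Perm (ℕ × Bool)
  | .z => 1
  | .a i => if _ : i < n then flipPerm i else 1
  | .s i => if _ : i + 1 < n then swapPerm i (i + 1) else 1

lemma FImg_z : FImg n BGen.z = 1 := rfl

lemma FImg_a {i : ℕ} (h : i < n) : FImg n (BGen.a i) = flipPerm i := dif_pos h

lemma FImg_s {i : ℕ} (h : i + 1 < n) : FImg n (BGen.s i) = swapPerm i (i + 1) := dif_pos h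

lemma comm_word {G : Type*} [Group G] {x y w : G} (h : x * y = w * x) :
    x * y * x⁻¹ * w⁻¹ = 1 := by
  rw [h]
  group

lemma rels_hold (n : ℕ) : ∀ r ∈ {w | BRel n w}, FreeGroup.lift (FImg n) r = 1 := by
  rintro r hr
  cases hr with
  | zsq =>
    simp only [map_mul, FreeGroup.lift_apply_of, FImg_z, mul_one]
  | zcentral g =>
    simp only [map_mul, map_inv, FreeGroup.lift_apply_of, FImg_z]
    group
  | asq i h =>
    simp only [map_mul, map_inv, FreeGroup.lift_apply_of, FImg_z, FImg_a h, inv_one, mul_one]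
    exact flip_sq i
  | aswap i j hij hi hj =>
    simp only [map_mul, map_inv, FreeGroup.lift_apply_of, FImg_z, FImg_a hi, FImg_a hj, one_mul]
    exact mul_inv_eq_one.mpr (flip_flip i j)
  | ssq i h =>
    simp only [map_mul, FreeGroup.lift_apply_of, FImg_s h]
    exact swapPerm_sq i (i + 1)
  | braid i h =>
    simp only [map_pow, map_mul, FreeGroup.lift_apply_of, FImg_s (show i + 1 < n by omega),
      FImg_s (show i + 1 + 1 < n by omega)]
    show ((Equiv.swap i (i + 1)).prodCongr (Equiv.refl Bool) *
      (Equiv.swap (i + 1) (i + 2)).prodCongr (Equiv.refl Bool)) ^ 3 = 1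
    rw [prodCongr_refl_mul, prodCongr_refl_pow,
      swap_three (by omega) (by omega) (by omega : i ≠ i + 2), prodCongr_refl_one]
  | sfar i j hij hj =>
    simp only [map_mul, map_inv, FreeGroup.lift_apply_of, FImg_s (show i + 1 < n by omega),
      FImg_s hj]
    apply comm_word
    show (Equiv.swap i (i + 1)).prodCongr (Equiv.refl Bool) *
        (Equiv.swap j (j + 1)).prodCongr (Equiv.refl Bool) =
      (Equiv.swap j (j + 1)).prodCongr (Equiv.refl Bool) *
        (Equiv.swap i (i + 1)).prodCongr (Equiv.refl Bool)
    rw [prodCongr_refl_mul, prodCongr_refl_mul,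
      swap_disjoint_comm (by omega) (by omega) (by omega) (by omega : i + 1 ≠ j + 1)]
  | sa1 i h =>
    simp only [map_mul, map_inv, FreeGroup.lift_apply_of, FImg_s h, FImg_a (show i < n by omega),
      FImg_a h]
    exact comm_word (swapPerm_flip_left (by omega))
  | sa2 i h =>
    simp only [map_mul, map_inv, FreeGroup.lift_apply_of, FImg_s h, FImg_a (show i < n by omega),
      FImg_a h]
    exact comm_word (swapPerm_flip_right (by omega))
  | sa3 i j h hj h1 h2 =>
    simp only [map_mul, map_inv, FreeGroup.lift_apply_of, FImg_s h, FImg_a hj]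
    exact comm_word (swapPerm_flip_other h1 h2)
  | akill i h =>
    simp only [FreeGroup.lift_apply_of]
    show (if _ : i < n then flipPerm i else (1 : Equiv.Perm (ℕ × Bool))) = 1
    rw [dif_neg (by omega)]
  | skill i h =>
    simp only [FreeGroup.lift_apply_of]
    show (if _ : i + 1 < n then swapPerm i (i + 1) else (1 : Equiv.Perm (ℕ × Bool))) = 1
    rw [dif_neg (by omega)]

/-- The permutation representation of `B̂_n` on `ℕ × Bool`. -/
def phi (n : ℕ) : Bhat n →* Equiv.Perm (ℕ × Bool) :=
  PresentedGroup.toGroup (rels_hold n)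

lemma phi_of (g : BGen) : phi n (PresentedGroup.of g) = FImg n g :=
  PresentedGroup.toGroup.of _

lemma phi_fix {h : Bhat n} (hh : h ∈ BhatPrev n) :
    phi n h (n - 1, false) = (n - 1, false) := by
  have hle : BhatPrev n ≤
      (MulAction.stabilizer (Equiv.Perm (ℕ × Bool)) ((n - 1 : ℕ), false)).comap (phi n) := by
    rw [BhatPrev]
    apply (Subgroup.closure_le _).mpr
    rintro x (⟨hx | hx⟩ | hx)
    · rw [Set.mem_singleton_iff] at hx
      subst hx
      simp only [SetLike.mem_coe, Subgroup.mem_comap, MulAction.mem_stabilizer_iff,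
        Equiv.Perm.smul_def]
      show phi n (PresentedGroup.of BGen.z) (n - 1, false) = (n - 1, false)
      rw [phi_of, FImg_z]
      rfl
    · obtain ⟨i, hi, rfl⟩ := hx
      simp only [SetLike.mem_coe, Subgroup.mem_comap, MulAction.mem_stabilizer_iff,
        Equiv.Perm.smul_def]
      show phi n (PresentedGroup.of (BGen.a i)) (n - 1, false) = (n - 1, false)
      rw [phi_of, FImg_a (by omega), flipPerm_apply, if_neg (by omega)]
    · obtain ⟨i, hi, rfl⟩ := hx
      simp only [SetLike.mem_coe, Subgroup.mem_comap, MulAction.mem_stabilizer_iff,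
        Equiv.Perm.smul_def]
      show phi n (PresentedGroup.of (BGen.s i)) (n - 1, false) = (n - 1, false)
      rw [phi_of, FImg_s (by omega), swapPerm_apply,
        Equiv.swap_apply_of_ne_of_ne (by omega) (by omega)]
  have := MulAction.mem_stabilizer_iff.mp (Subgroup.mem_comap.mp (hle hh))
  exact this

lemma phi_sProd (hn : 2 ≤ n) {i : ℕ} (hi : i ≤ n - 1) (b : Bool) :
    phi n (sProd n i (n - 1)) (n - 1, b) = (i, b) := by
  by_cases h : i < n - 1
  · rw [sProd_succ h, map_mul, Equiv.Perm.mul_apply, phi_sProd hn (by omega) b,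
      show sElt n i = PresentedGroup.of (BGen.s i) from rfl, phi_of, FImg_s (by omega),
      swapPerm_apply, Equiv.swap_apply_right]
  · have : i = n - 1 := by omega
    subst this
    rw [sProd_eq_one le_rfl, map_one]
    rfl
termination_by n - 1 - i

lemma phi_rep (hn : 2 ≤ n) (p : Fin n × Bool) :
    phi n (cosetRep n p) (n - 1, false) = ((p.1 : ℕ), p.2) := by
  obtain ⟨⟨i, hi⟩, ε⟩ := p
  rw [cosetRep_mk, map_mul, Equiv.Perm.mul_apply]
  cases ε
  · rw [pow_cond_false, map_one]
    exact phi_sProd hn (by omega) false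
  · rw [pow_cond_true, show aElt n (n - 1) = PresentedGroup.of (BGen.a (n - 1)) from rfl,
      phi_of, FImg_a (by omega), flipPerm_apply, if_pos rfl]
    exact phi_sProd hn (by omega) true

lemma inj (hn : 2 ≤ n) :
    Function.Injective (fun p : Fin n × Bool =>
      (QuotientGroup.mk (cosetRep n p) : Bhat n ⧸ BhatPrev n)) := by
  intro p q hpq
  simp only at hpq
  have hmem := QuotientGroup.eq.mp hpq
  have h2 := phi_fix hmem
  rw [map_mul, map_inv, Equiv.Perm.mul_apply] at h2
  have h3 : phi n (cosetRep n q) (n - 1, false) = phi n (cosetRep n p) (n - 1, false) := by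
    have := congrArg (phi n (cosetRep n p)) h2
    rwa [← Equiv.Perm.mul_apply, mul_inv_cancel, Equiv.Perm.one_apply] at this
  rw [phi_rep hn, phi_rep hn] at h3
  have h4 : (q.1 : ℕ) = (p.1 : ℕ) := (Prod.ext_iff.mp h3).1
  have h5 : q.2 = p.2 := (Prod.ext_iff.mp h3).2
  exact Prod.ext (Fin.val_injective h4).symm h5.symm

end BhatAux
/-- for `n ≥ 2`, the `2n` elements `s_i ⋯ s_{n-1} a_n^ε`
(`1 ≤ i ≤ n`, `ε ∈ {0,1}`) form a complete set of left coset representatives of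
`B̂_{n-1}` in `B̂_n`, i.e. the map `(i,ε) ↦ (s_i⋯s_{n-1}a_n^ε)·B̂_{n-1}` is a
bijection onto the set of left cosets. -/
theorem coset_representatives (n : ℕ) (hn : 2 ≤ n) :
    Function.Bijective
      (fun p : Fin n × Bool => (QuotientGroup.mk (cosetRep n p) : Bhat n ⧸ BhatPrev n)) := by
  exact ⟨BhatAux.inj hn, BhatAux.surj hn⟩
end

section
/- Let λ be a strict partition of n and ν a strict partition of n−1. Then the down transition function of the Schur graph satisfies p↓(λ,ν) = [L^ν : Res L^λ] · dim(L^ν)/dim(L^λ), where [L^ν : Res L^λ] is the multiplicity of the simple S_{n−1}-supermodule L^ν in the restriction of L^λ to S_{n−1}. -/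
def shiftedCells (l : List ℕ) : Finset (ℕ × ℕ) :=
  (Finset.range l.length).biUnion fun i =>
    (Finset.Ico i (i + l.getD i 0)).image fun j => (i, j)

def IsSP (l : List ℕ) : Prop := l.Pairwise (· > ·) ∧ ∀ x ∈ l, 0 < x

def IsStrictPartition (l : List ℕ) (n : ℕ) : Prop := IsSP l ∧ l.sum = n

def STab (l : List ℕ) : Type :=
  {T : {c : ℕ × ℕ // c ∈ shiftedCells l} ≃ Fin l.sum //
    (∀ a b : {c : ℕ × ℕ // c ∈ shiftedCells l},
        a.1.1 = b.1.1 → a.1.2 < b.1.2 → T a < T b) ∧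
    (∀ a b : {c : ℕ × ℕ // c ∈ shiftedCells l},
        a.1.2 = b.1.2 → a.1.1 < b.1.1 → T a < T b)}

/-- Remove a cell from row `i` (dropping the row if it becomes empty). -/
def removeCell (l : List ℕ) (i : ℕ) : List ℕ :=
  (l.set i (l.getD i 0 - 1)).filter (fun x => x != 0)

/-- Add a cell to row `i` (appending a new row of size 1 when `i = l.length`). -/
def addCell (l : List ℕ) (i : ℕ) : List ℕ :=
  if i < l.length then l.set i (l.getD i 0 + 1) else l ++ [1]

lemma mem_shiftedCells {l : List ℕ} {c : ℕ × ℕ} :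
    c ∈ shiftedCells l ↔ c.1 < l.length ∧ c.1 ≤ c.2 ∧ c.2 < c.1 + l.getD c.1 0 := by
  unfold shiftedCells
  simp only [Finset.mem_biUnion, Finset.mem_range, Finset.mem_image, Finset.mem_Ico]
  constructor
  · rintro ⟨i, hi, j, hj, rfl⟩; exact ⟨hi, hj.1, hj.2⟩
  · rintro ⟨h1, h2, h3⟩; exact ⟨c.1, h1, c.2, ⟨h2, h3⟩, rfl⟩

lemma sum_getD (l : List ℕ) : ∑ i ∈ Finset.range l.length, l.getD i 0 = l.sum := by
  induction l with
  | nil => simp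
  | cons a t ih =>
    rw [List.length_cons, Finset.sum_range_succ']
    simp only [List.getD_cons_succ, List.getD_cons_zero, List.sum_cons, ih]
    omega

lemma card_shiftedCells (l : List ℕ) : (shiftedCells l).card = l.sum := by
  unfold shiftedCells
  rw [Finset.card_biUnion]
  · rw [← sum_getD]
    refine Finset.sum_congr rfl fun i _ => ?_
    rw [Finset.card_image_of_injective _ (fun a b h => by simpa using h), Nat.card_Ico]
    omega
  · intro x _ y _ hxy
    simp only [Finset.disjoint_left, Finset.mem_image, Finset.mem_Ico]
    rintro c ⟨j, _, rfl⟩ ⟨k, _, h⟩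
    exact hxy (by simpa using (congrArg Prod.fst h).symm)

lemma getD_pos {l : List ℕ} (hp : ∀ x ∈ l, 0 < x) {i : ℕ} (hi : i < l.length) :
    0 < l.getD i 0 := by
  rw [List.getD_eq_getElem _ _ hi]; exact hp _ (l.getElem_mem hi)

lemma length_le_sum {l : List ℕ} (hp : ∀ x ∈ l, 0 < x) : l.length ≤ l.sum := by
  induction l with
  | nil => simp
  | cons a t ih =>
    simp only [List.length_cons, List.sum_cons]
    have := hp a (by simp)
    have := ih (fun x hx => hp x (by simp [hx]))
    omega

lemma getD_set_of_lt {l : List ℕ} {i j v : ℕ} :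
    (l.set i v).getD j 0 = if i = j ∧ j < l.length then v else l.getD j 0 := by
  rw [List.getD_eq_getElem?_getD, List.getD_eq_getElem?_getD, List.getElem?_set]
  split
  · rename_i h; subst h
    by_cases hj : i < l.length
    · simp [hj]
    · rw [List.getElem?_eq_none (by omega)]
      simp [hj]
  · rename_i h; rw [if_neg (fun hh => h hh.1)]

lemma getD_take {l : List ℕ} {i j : ℕ} :
    (l.take i).getD j 0 = if j < i then l.getD j 0 else 0 := by
  rw [List.getD_eq_getElem?_getD, List.getD_eq_getElem?_getD, List.getElem?_take]
  split <;> simp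

/-- gap lemma for strictly decreasing lists -/
lemma sorted_getD_add_le {l : List ℕ} (hs : l.Pairwise (· > ·)) {i k : ℕ}
    (h : i + k < l.length) : l.getD (i + k) 0 + k ≤ l.getD i 0 := by
  induction k with
  | zero => simp
  | succ m ih =>
    have h1 : i + m < l.length := by omega
    have h2 : l.getD (i + (m + 1)) 0 < l.getD (i + m) 0 := by
      rw [show i + (m+1) = i + m + 1 from rfl] at h ⊢
      rw [List.getD_eq_getElem _ _ h, List.getD_eq_getElem _ _ h1]
      exact List.pairwise_iff_getElem.1 hs _ _ h1 h (by omega)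
    have := ih h1
    omega

lemma sorted_getD_lt {l : List ℕ} (hs : l.Pairwise (· > ·)) {i j : ℕ}
    (hij : i < j) (h : j < l.length) : l.getD j 0 < l.getD i 0 := by
  have := sorted_getD_add_le hs (k := j - i) (i := i) (by omega)
  rw [show i + (j - i) = j by omega] at this; omega

def Removable (l : List ℕ) (i : ℕ) : Prop :=
  i < l.length ∧ (l.getD (i+1) 0 + 1 < l.getD i 0 ∨ (i + 1 = l.length ∧ l.getD i 0 = 1))

instance : ∀ l i, Decidable (Removable l i) := fun l i => by unfold Removable; infer_instance

lemma removable_last {l : List ℕ} {i : ℕ} (hrem : Removable l i) (h1 : l.getD i 0 = 1) :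
    i + 1 = l.length := by
  rcases hrem.2 with h | h
  · omega
  · exact h.1

lemma rm_eq_set {l : List ℕ} {i : ℕ} (hp : ∀ x ∈ l, 0 < x) (h2 : 2 ≤ l.getD i 0) :
    removeCell l i = l.set i (l.getD i 0 - 1) := by
  unfold removeCell
  rw [List.filter_eq_self]
  intro a ha
  rcases List.mem_or_eq_of_mem_set ha with h | h
  · have := hp a h; simp only [bne_iff_ne, ne_eq]; omega
  · subst h; simp only [bne_iff_ne, ne_eq]; omega

lemma rm_eq_take {l : List ℕ} {i : ℕ} (hp : ∀ x ∈ l, 0 < x) (hlast : i + 1 = l.length)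
    (h1 : l.getD i 0 = 1) : removeCell l i = l.take i := by
  unfold removeCell
  rw [h1, List.set_eq_take_append_cons_drop, if_pos (by omega),
    List.drop_eq_nil_of_le (by omega), List.filter_append]
  have : List.filter (fun x => x != 0) (l.take i) = l.take i := by
    rw [List.filter_eq_self]
    intro a ha
    have := hp a (List.mem_of_mem_take ha); simp; omega
  simp [this]

lemma sum_filter_ne_zero (L : List ℕ) : (L.filter (fun x => x != 0)).sum = L.sum := by
  induction L with
  | nil => rfl
  | cons a t ih =>
    by_cases h : a = 0
    · simp [h, List.filter_cons, ih]
    · simp [List.filter_cons, h, ih]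

lemma rm_sum {l : List ℕ} {i : ℕ} (hp : ∀ x ∈ l, 0 < x) (hi : i < l.length) :
    (removeCell l i).sum = l.sum - 1 := by
  unfold removeCell
  rw [sum_filter_ne_zero, List.sum_set]
  have h1 : (List.take i l).sum + (List.drop i l).sum = l.sum := List.sum_take_add_sum_drop l i
  have h2 : List.drop i l = l[i] :: List.drop (i+1) l := List.drop_eq_getElem_cons hi
  have h3 : l.getD i 0 = l[i] := List.getD_eq_getElem l 0 hi
  have h4 : 0 < l[i] := hp _ (l.getElem_mem hi)
  rw [if_pos hi, h3]
  rw [h2, List.sum_cons] at h1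
  omega

lemma rm_length {l : List ℕ} {i : ℕ} (hp : ∀ x ∈ l, 0 < x) (hrem : Removable l i) :
    (removeCell l i).length = if l.getD i 0 = 1 then l.length - 1 else l.length := by
  by_cases h1 : l.getD i 0 = 1
  · rw [rm_eq_take hp (removable_last hrem h1) h1, if_pos h1, List.length_take]
    have := removable_last hrem h1; omega
  · rw [rm_eq_set hp (by have := getD_pos hp hrem.1; omega), if_neg h1, List.length_set]

lemma rm_getD_set {l : List ℕ} {i j : ℕ} (hp : ∀ x ∈ l, 0 < x) (h2 : 2 ≤ l.getD i 0) :
    (removeCell l i).getD j 0 = if i = j ∧ j < l.length then l.getD i 0 - 1 else l.getD j 0 := by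
  rw [rm_eq_set hp h2, getD_set_of_lt]

lemma isSP_rm {l : List ℕ} {i : ℕ} (hl : IsSP l) (hrem : Removable l i) :
    IsSP (removeCell l i) := by
  by_cases h1 : l.getD i 0 = 1
  · rw [rm_eq_take hl.2 (removable_last hrem h1) h1]
    exact ⟨List.Pairwise.sublist (List.take_sublist i l) hl.1,
      fun x hx => hl.2 x (List.mem_of_mem_take hx)⟩
  · have hgi := getD_pos hl.2 hrem.1
    rw [rm_eq_set hl.2 (by omega)]
    constructor
    · rw [List.pairwise_iff_getElem]
      intro a b ha hb hab
      rw [List.length_set] at ha hb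
      have ga : ∀ k (hk : k < l.length), l[k] = l.getD k 0 := fun k hk =>
        (List.getD_eq_getElem l 0 hk).symm
      rw [List.getElem_set, List.getElem_set]
      have hsor : ∀ p q, p < q → q < l.length → l.getD q 0 < l.getD p 0 := fun p q h h' =>
        sorted_getD_lt hl.1 h h'
      by_cases hia : i = a
      · rw [if_pos hia, if_neg (show ¬ i = b by omega)]
        rw [ga b hb]
        rcases hrem.2 with h | h
        · have hb' : b = i + 1 ∨ i + 1 < b := by omega
          rcases hb' with h' | h'
          · subst h'; omega
          · have := hsor (i+1) b h' hb; omega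
        · omega
      · rw [if_neg hia]
        by_cases hib : i = b
        · subst hib
          rw [if_pos rfl, ga a ha]
          have := hsor a i hab hb
          omega
        · rw [if_neg hib, ga a ha, ga b hb]; exact hsor a b hab hb
    · intro x hx
      rcases List.mem_or_eq_of_mem_set hx with h | h
      · exact hl.2 x h
      · omega

lemma corner_mem {l : List ℕ} {i : ℕ} (hp : ∀ x ∈ l, 0 < x) (hi : i < l.length) :
    (i, i + l.getD i 0 - 1) ∈ shiftedCells l := by
  have := getD_pos hp hi
  rw [mem_shiftedCells]
  show i < l.length ∧ i ≤ i + l.getD i 0 - 1 ∧ i + l.getD i 0 - 1 < i + l.getD i 0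
  omega

lemma cells_rm {l : List ℕ} {i : ℕ} (hl : IsSP l) (hrem : Removable l i) :
    shiftedCells (removeCell l i) = (shiftedCells l).erase (i, i + l.getD i 0 - 1) := by
  ext c
  obtain ⟨a, b⟩ := c
  rw [mem_shiftedCells, Finset.mem_erase, mem_shiftedCells]
  simp only [Prod.mk.injEq, ne_eq, not_and]
  show _ ↔ (a = i → ¬ b = i + l.getD i 0 - 1) ∧ a < l.length ∧ a ≤ b ∧ b < a + l.getD a 0
  by_cases h1 : l.getD i 0 = 1
  · have hlast := removable_last hrem h1
    rw [rm_eq_take hl.2 hlast h1]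
    simp only [List.length_take, getD_take]
    constructor
    · rintro ⟨ha, hab, hb⟩
      rw [if_pos (by omega)] at hb
      exact ⟨fun hh => by omega, by omega, hab, hb⟩
    · rintro ⟨hne, ha, hab, hb⟩
      have hai : a < i := by
        rcases Nat.lt_trichotomy a i with h | h | h
        · exact h
        · subst h; have := hne rfl; omega
        · omega
      refine ⟨by omega, hab, ?_⟩
      rw [if_pos hai]; exact hb
  · have h2 : 2 ≤ l.getD i 0 := by have := getD_pos hl.2 hrem.1; omega
    rw [rm_eq_set hl.2 h2]
    simp only [List.length_set, getD_set_of_lt]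
    constructor
    · rintro ⟨ha, hab, hb⟩
      by_cases hia : i = a
      · subst hia
        rw [if_pos ⟨rfl, ha⟩] at hb
        exact ⟨fun _ => by omega, ha, hab, by omega⟩
      · rw [if_neg (fun hh => hia hh.1)] at hb
        exact ⟨fun hh => (hia hh.symm).elim, ha, hab, hb⟩
    · rintro ⟨hne, ha, hab, hb⟩
      refine ⟨ha, hab, ?_⟩
      by_cases hia : i = a
      · subst hia
        rw [if_pos ⟨rfl, ha⟩]
        have := hne rfl
        omega
      · rw [if_neg (fun hh => hia hh.1)]; exact hb

instance STab.finite (l : List ℕ) : Finite (STab l) := by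
  unfold STab
  infer_instance

lemma isEmpty_cell_nil : IsEmpty {c : ℕ × ℕ // c ∈ shiftedCells []} := by
  constructor
  rintro ⟨c, hc⟩
  rw [mem_shiftedCells] at hc
  simp at hc

lemma card_STab_nil : Nat.card (STab []) = 1 := by
  letI := isEmpty_cell_nil
  haveI : IsEmpty (Fin (List.sum [])) := by simp; infer_instance
  have hu : Unique (STab []) :=
    { default := ⟨Equiv.equivOfIsEmpty _ _, fun a => isEmptyElim a, fun a => isEmptyElim a⟩
      uniq := fun T => Subtype.ext (Equiv.ext fun a => isEmptyElim a) }
  exact Nat.card_unique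

lemma sum_pos_of_rem {l : List ℕ} {i : ℕ} (hl : IsSP l) (hrem : Removable l i) :
    1 ≤ l.sum := by
  have h1 : 1 ≤ l.length := by have := hrem.1; omega
  exact h1.trans (length_le_sum hl.2)

lemma mem_rm {l : List ℕ} {i : ℕ} (hl : IsSP l) (hrem : Removable l i) {c : ℕ × ℕ} :
    c ∈ shiftedCells (removeCell l i) ↔ c ≠ (i, i + l.getD i 0 - 1) ∧ c ∈ shiftedCells l := by
  rw [cells_rm hl hrem, Finset.mem_erase]

/-- forward map extending a tableau of `removeCell l i` by putting the max entry
in the corner of row `i`. -/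
noncomputable def fwd {l : List ℕ} {i : ℕ} (hl : IsSP l) (hrem : Removable l i)
    (T' : STab (removeCell l i)) (d : {c : ℕ × ℕ // c ∈ shiftedCells l}) : Fin l.sum :=
  if h : d.1 = (i, i + l.getD i 0 - 1) then
    ⟨l.sum - 1, by have := sum_pos_of_rem hl hrem; omega⟩
  else
    ⟨(T'.1 ⟨d.1, (mem_rm hl hrem).2 ⟨h, d.2⟩⟩).1, by
      have h1 := (T'.1 ⟨d.1, (mem_rm hl hrem).2 ⟨h, d.2⟩⟩).2
      have h2 := rm_sum hl.2 hrem.1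
      have h3 := sum_pos_of_rem hl hrem
      omega⟩

lemma fwd_corner {l : List ℕ} {i : ℕ} (hl : IsSP l) (hrem : Removable l i)
    (T' : STab (removeCell l i)) {d : {c : ℕ × ℕ // c ∈ shiftedCells l}}
    (hd : d.1 = (i, i + l.getD i 0 - 1)) : (fwd hl hrem T' d).1 = l.sum - 1 := by
  unfold fwd
  rw [dif_pos hd]

lemma fwd_ne {l : List ℕ} {i : ℕ} (hl : IsSP l) (hrem : Removable l i)
    (T' : STab (removeCell l i)) {d : {c : ℕ × ℕ // c ∈ shiftedCells l}}
    (hd : d.1 ≠ (i, i + l.getD i 0 - 1)) (hm : d.1 ∈ shiftedCells (removeCell l i)) :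
    (fwd hl hrem T' d).1 = (T'.1 ⟨d.1, hm⟩).1 := by
  unfold fwd
  rw [dif_neg hd]

lemma fwd_ne_lt {l : List ℕ} {i : ℕ} (hl : IsSP l) (hrem : Removable l i)
    (T' : STab (removeCell l i)) {d : {c : ℕ × ℕ // c ∈ shiftedCells l}}
    (hd : d.1 ≠ (i, i + l.getD i 0 - 1)) : (fwd hl hrem T' d).1 < l.sum - 1 := by
  have hm : d.1 ∈ shiftedCells (removeCell l i) := (mem_rm hl hrem).2 ⟨hd, d.2⟩
  rw [fwd_ne hl hrem T' hd hm]
  have h1 := (T'.1 ⟨d.1, hm⟩).2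
  have h2 := rm_sum hl.2 hrem.1
  omega

lemma fwd_bijective {l : List ℕ} {i : ℕ} (hl : IsSP l) (hrem : Removable l i)
    (T' : STab (removeCell l i)) : Function.Bijective (fwd hl hrem T') := by
  have hm := rm_sum hl.2 hrem.1
  have hn := sum_pos_of_rem hl hrem
  constructor
  · intro a b hab
    by_cases ha : a.1 = (i, i + l.getD i 0 - 1) <;>
      by_cases hb : b.1 = (i, i + l.getD i 0 - 1)
    · exact Subtype.ext (ha.trans hb.symm)
    · have h1 := fwd_corner hl hrem T' ha
      have h2 := fwd_ne_lt hl hrem T' hb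
      rw [hab] at h1; omega
    · have h1 := fwd_corner hl hrem T' hb
      have h2 := fwd_ne_lt hl hrem T' ha
      rw [hab] at h2; omega
    · have hma : a.1 ∈ shiftedCells (removeCell l i) := (mem_rm hl hrem).2 ⟨ha, a.2⟩
      have hmb : b.1 ∈ shiftedCells (removeCell l i) := (mem_rm hl hrem).2 ⟨hb, b.2⟩
      have h1 := fwd_ne hl hrem T' ha hma
      have h2 := fwd_ne hl hrem T' hb hmb
      rw [hab] at h1
      have heq : T'.1 ⟨a.1, hma⟩ = T'.1 ⟨b.1, hmb⟩ := Fin.ext ((h1.symm.trans h2).symm).symm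
      have heq2 := T'.1.injective heq
      have hval : a.1 = b.1 := Subtype.mk.inj heq2
      exact Subtype.ext hval
  · intro v
    by_cases hv : v.1 = l.sum - 1
    · refine ⟨⟨(i, i + l.getD i 0 - 1), corner_mem hl.2 hrem.1⟩, Fin.ext ?_⟩
      rw [fwd_corner hl hrem T' rfl, hv]
    · have hvm : v.1 < (removeCell l i).sum := by have := v.2; omega
      set x := T'.1.symm ⟨v.1, hvm⟩ with hx
      have hxm := x.2
      have hxc := ((mem_rm hl hrem).1 hxm).1
      have hxl := ((mem_rm hl hrem).1 hxm).2
      refine ⟨⟨x.1, hxl⟩, Fin.ext ?_⟩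
      rw [fwd_ne hl hrem T' hxc hxm]
      have : (⟨x.1, hxm⟩ : {c : ℕ × ℕ // c ∈ shiftedCells (removeCell l i)}) = x :=
        Subtype.ext rfl
      rw [this, hx, Equiv.apply_symm_apply]


lemma fwd_row {l : List ℕ} {i : ℕ} (hl : IsSP l) (hrem : Removable l i)
    (T' : STab (removeCell l i)) (a b : {c : ℕ × ℕ // c ∈ shiftedCells l})
    (h1 : a.1.1 = b.1.1) (h2 : a.1.2 < b.1.2) :
    fwd hl hrem T' a < fwd hl hrem T' b := by
  rw [Fin.lt_def]
  have hma := mem_shiftedCells.1 a.2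
  have hmb := mem_shiftedCells.1 b.2
  by_cases hb : b.1 = (i, i + l.getD i 0 - 1)
  · by_cases ha : a.1 = (i, i + l.getD i 0 - 1)
    · exfalso
      have : a.1.2 = b.1.2 := by rw [ha, hb]
      omega
    · have hv1 := fwd_ne_lt hl hrem T' ha
      have hv2 := fwd_corner hl hrem T' hb
      omega
  · have ha : a.1 ≠ (i, i + l.getD i 0 - 1) := by
      intro ha
      have e1 : a.1.1 = i := by rw [ha]
      have e2 : a.1.2 = i + l.getD i 0 - 1 := by rw [ha]
      have e3 : b.1.1 = i := by omega
      rw [e3] at hmb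
      have := getD_pos hl.2 hrem.1
      omega
    have hma' : a.1 ∈ shiftedCells (removeCell l i) := (mem_rm hl hrem).2 ⟨ha, a.2⟩
    have hmb' : b.1 ∈ shiftedCells (removeCell l i) := (mem_rm hl hrem).2 ⟨hb, b.2⟩
    rw [fwd_ne hl hrem T' ha hma', fwd_ne hl hrem T' hb hmb']
    exact Fin.lt_def.1 (T'.2.1 ⟨a.1, hma'⟩ ⟨b.1, hmb'⟩ h1 h2)

lemma fwd_col {l : List ℕ} {i : ℕ} (hl : IsSP l) (hrem : Removable l i)
    (T' : STab (removeCell l i)) (a b : {c : ℕ × ℕ // c ∈ shiftedCells l})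
    (h1 : a.1.2 = b.1.2) (h2 : a.1.1 < b.1.1) :
    fwd hl hrem T' a < fwd hl hrem T' b := by
  rw [Fin.lt_def]
  have hma := mem_shiftedCells.1 a.2
  have hmb := mem_shiftedCells.1 b.2
  by_cases hb : b.1 = (i, i + l.getD i 0 - 1)
  · by_cases ha : a.1 = (i, i + l.getD i 0 - 1)
    · exfalso
      have : a.1.1 = b.1.1 := by rw [ha, hb]
      omega
    · have hv1 := fwd_ne_lt hl hrem T' ha
      have hv2 := fwd_corner hl hrem T' hb
      omega
  · have ha : a.1 ≠ (i, i + l.getD i 0 - 1) := by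
      intro ha
      have e1 : a.1.1 = i := by rw [ha]
      have e2 : a.1.2 = i + l.getD i 0 - 1 := by rw [ha]
      have hgd := getD_pos hl.2 hrem.1
      by_cases hg1 : l.getD i 0 = 1
      · omega
      · have hd : l.getD (i+1) 0 + 1 < l.getD i 0 := by
          rcases hrem.2 with h | h
          · exact h
          · omega
        have hb1 : i + 1 ≤ b.1.1 := by omega
        have hb2 : b.1.1 < l.length := hmb.1
        have hE : i + 1 + (b.1.1 - (i+1)) = b.1.1 := by omega
        have gap := sorted_getD_add_le hl.1 (i := i + 1) (k := b.1.1 - (i+1)) (by omega)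
        rw [hE] at gap
        omega
    have hma' : a.1 ∈ shiftedCells (removeCell l i) := (mem_rm hl hrem).2 ⟨ha, a.2⟩
    have hmb' : b.1 ∈ shiftedCells (removeCell l i) := (mem_rm hl hrem).2 ⟨hb, b.2⟩
    rw [fwd_ne hl hrem T' ha hma', fwd_ne hl hrem T' hb hmb']
    exact Fin.lt_def.1 (T'.2.2 ⟨a.1, hma'⟩ ⟨b.1, hmb'⟩ h1 h2)

noncomputable def extend {l : List ℕ} {i : ℕ} (hl : IsSP l) (hrem : Removable l i)
    (T' : STab (removeCell l i)) : STab l :=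
  ⟨Equiv.ofBijective _ (fwd_bijective hl hrem T'),
    fun a b h1 h2 => fwd_row hl hrem T' a b h1 h2,
    fun a b h1 h2 => fwd_col hl hrem T' a b h1 h2⟩

lemma extend_apply {l : List ℕ} {i : ℕ} (hl : IsSP l) (hrem : Removable l i)
    (T' : STab (removeCell l i)) (d : {c : ℕ × ℕ // c ∈ shiftedCells l}) :
    (extend hl hrem T').1 d = fwd hl hrem T' d := rfl


noncomputable def G (l : List ℕ) (hl : IsSP l) :
    (Σ x : {i : Fin l.length // Removable l i.1}, STab (removeCell l x.1.1)) → STab l :=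
  fun p => extend hl p.1.2 p.2

lemma G_injective (l : List ℕ) (hl : IsSP l) : Function.Injective (G l hl) := by
  rintro ⟨⟨a, hra⟩, Ta⟩ ⟨⟨b, hrb⟩, Tb⟩ h
  have h' : extend hl hra Ta = extend hl hrb Tb := h
  have happ : ∀ d, (extend hl hra Ta).1 d = (extend hl hrb Tb).1 d := fun d => by rw [h']
  -- evaluate at the corner of row a
  have hab : a = b := by
    set d0 : {c : ℕ × ℕ // c ∈ shiftedCells l} :=
      ⟨(a.1, a.1 + l.getD a.1 0 - 1), corner_mem hl.2 hra.1⟩ with hd0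
    have hv1 : ((extend hl hra Ta).1 d0).1 = l.sum - 1 := by
      rw [extend_apply]; exact fwd_corner hl hra Ta rfl
    by_cases hcc : d0.1 = (b.1, b.1 + l.getD b.1 0 - 1)
    · exact Fin.ext (congrArg Prod.fst hcc)
    · exfalso
      have hv2 : ((extend hl hrb Tb).1 d0).1 < l.sum - 1 := by
        rw [extend_apply]; exact fwd_ne_lt hl hrb Tb hcc
      rw [happ d0] at hv1
      omega
  subst hab
  have hTT : Ta = Tb := by
    refine Subtype.ext (Equiv.ext fun d => ?_)
    have hd1 : d.1 ≠ (a.1, a.1 + l.getD a.1 0 - 1) := ((mem_rm hl hra).1 d.2).1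
    have hdl : d.1 ∈ shiftedCells l := ((mem_rm hl hra).1 d.2).2
    have := happ ⟨d.1, hdl⟩
    rw [extend_apply, extend_apply] at this
    have e1 := fwd_ne hl hra Ta (d := ⟨d.1, hdl⟩) hd1 d.2
    have e2 := fwd_ne hl hrb Tb (d := ⟨d.1, hdl⟩) hd1 d.2
    have : (Ta.1 ⟨d.1, d.2⟩).1 = (Tb.1 ⟨d.1, d.2⟩).1 := by
      rw [← e1, ← e2, this]
    exact Fin.ext this
  rw [hTT]

lemma G_surjective (l : List ℕ) (hl : IsSP l) (hne : l ≠ []) :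
    Function.Surjective (G l hl) := by
  intro T
  have hlen : 1 ≤ l.length := by
    cases l with
    | nil => exact absurd rfl hne
    | cons x t => simp
  have hn : 1 ≤ l.sum := hlen.trans (length_le_sum hl.2)
  set last : Fin l.sum := ⟨l.sum - 1, by omega⟩ with hlast
  set c := T.1.symm last with hcdef
  have hc : T.1 c = last := Equiv.apply_symm_apply _ _
  have hm := mem_shiftedCells.1 c.2
  set i := c.1.1 with hidef
  have hgd := getD_pos hl.2 hm.1
  have hlastval : (last : ℕ) = l.sum - 1 := rfl
  -- the cell of the maximum is at the end of its row
  have hcol2 : c.1.2 = i + l.getD i 0 - 1 := by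
    by_contra hne2
    have hmem : (i, c.1.2 + 1) ∈ shiftedCells l := mem_shiftedCells.2
      (show i < l.length ∧ i ≤ c.1.2 + 1 ∧ c.1.2 + 1 < i + l.getD i 0 by omega)
    have hlt := T.2.1 c ⟨(i, c.1.2 + 1), hmem⟩ rfl (Nat.lt_succ_self _)
    rw [hc, Fin.lt_def] at hlt
    have hub := (T.1 ⟨(i, c.1.2 + 1), hmem⟩).2
    omega
  -- row i is removable
  have hremi : Removable l i := by
    refine ⟨hm.1, ?_⟩
    by_cases hl1 : i + 1 = l.length
    · by_cases hg1 : l.getD i 0 = 1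
      · exact Or.inr ⟨hl1, hg1⟩
      · have h0 : l.getD (i+1) 0 = 0 := List.getD_eq_default _ _ (by omega)
        exact Or.inl (by omega)
    · have hi1 : i + 1 < l.length := by omega
      left
      by_contra hcon
      have hlt := sorted_getD_lt hl.1 (show i < i + 1 by omega) hi1
      have hg2 : 2 ≤ l.getD i 0 := by have := getD_pos hl.2 hi1; omega
      have hmem : (i + 1, c.1.2) ∈ shiftedCells l := mem_shiftedCells.2
        (show i + 1 < l.length ∧ i + 1 ≤ c.1.2 ∧ c.1.2 < i + 1 + l.getD (i+1) 0 by omega)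
      have hlt2 := T.2.2 c ⟨(i + 1, c.1.2), hmem⟩ rfl (show i < i + 1 by omega)
      rw [hc, Fin.lt_def] at hlt2
      have hub := (T.1 ⟨(i + 1, c.1.2), hmem⟩).2
      omega
  have hcner : c.1 = (i, i + l.getD i 0 - 1) := Prod.ext rfl hcol2
  have hrs : (removeCell l i).sum = l.sum - 1 := rm_sum hl.2 hm.1
  have hmemL : ∀ d : {x : ℕ × ℕ // x ∈ shiftedCells (removeCell l i)},
      d.1 ∈ shiftedCells l := fun d => ((mem_rm hl hremi).1 d.2).2
  have key : ∀ d : {x : ℕ × ℕ // x ∈ shiftedCells (removeCell l i)},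
      (T.1 ⟨d.1, hmemL d⟩).1 < (removeCell l i).sum := by
    intro d
    have hdc : d.1 ≠ c.1 := by rw [hcner]; exact ((mem_rm hl hremi).1 d.2).1
    have hub := (T.1 ⟨d.1, hmemL d⟩).2
    have hvne : (T.1 ⟨d.1, hmemL d⟩).1 ≠ l.sum - 1 := by
      intro hEq
      have : T.1 ⟨d.1, hmemL d⟩ = last := Fin.ext (by rw [hEq, hlastval])
      have := T.1.injective (this.trans hc.symm)
      exact hdc (congrArg Subtype.val this)
    omega
  set g : {x : ℕ × ℕ // x ∈ shiftedCells (removeCell l i)} → Fin ((removeCell l i).sum) :=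
    fun d => ⟨(T.1 ⟨d.1, hmemL d⟩).1, key d⟩ with hgdef
  have hgbij : Function.Bijective g := by
    constructor
    · intro x y hxy
      have hv2 : (g x).1 = (g y).1 := congrArg Fin.val hxy
      have : T.1 ⟨x.1, hmemL x⟩ = T.1 ⟨y.1, hmemL y⟩ := Fin.ext hv2
      have := T.1.injective this
      exact Subtype.ext (Subtype.mk.inj this)
    · intro v
      have hv : (v : ℕ) < l.sum := by have := v.2; omega
      set x := T.1.symm ⟨v.1, hv⟩ with hxdef
      have hx : T.1 x = ⟨v.1, hv⟩ := Equiv.apply_symm_apply _ _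
      have hxc : x.1 ≠ (i, i + l.getD i 0 - 1) := by
        intro hEq
        have hxeq : x = c := Subtype.ext (hEq.trans hcner.symm)
        have hx2 : T.1 x = ⟨v.1, hv⟩ := hx
        rw [hxeq, hc] at hx2
        have hveq : l.sum - 1 = (v : ℕ) := congrArg Fin.val hx2
        have := v.2
        omega
      have hxm : x.1 ∈ shiftedCells (removeCell l i) := (mem_rm hl hremi).2 ⟨hxc, x.2⟩
      refine ⟨⟨x.1, hxm⟩, Fin.ext ?_⟩
      show (T.1 ⟨x.1, hmemL ⟨x.1, hxm⟩⟩).1 = v.1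
      have hxe : (⟨x.1, hmemL ⟨x.1, hxm⟩⟩ : {c : ℕ × ℕ // c ∈ shiftedCells l}) = x :=
        Subtype.ext rfl
      rw [hxe, hx]
  set T' : STab (removeCell l i) :=
    ⟨Equiv.ofBijective g hgbij,
      fun a b h1 h2 => Fin.lt_def.2 (Fin.lt_def.1
        (T.2.1 ⟨a.1, hmemL a⟩ ⟨b.1, hmemL b⟩ h1 h2)),
      fun a b h1 h2 => Fin.lt_def.2 (Fin.lt_def.1
        (T.2.2 ⟨a.1, hmemL a⟩ ⟨b.1, hmemL b⟩ h1 h2))⟩ with hT'def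
  refine ⟨⟨⟨⟨i, hm.1⟩, hremi⟩, T'⟩, ?_⟩
  show extend hl hremi T' = T
  refine Subtype.ext (Equiv.ext fun d => Fin.ext ?_)
  rw [extend_apply]
  by_cases hd : d.1 = (i, i + l.getD i 0 - 1)
  · rw [fwd_corner hl hremi T' hd]
    have : d = c := Subtype.ext (hd.trans hcner.symm)
    rw [this, hc, hlastval]
  · have hdm : d.1 ∈ shiftedCells (removeCell l i) := (mem_rm hl hremi).2 ⟨hd, d.2⟩
    rw [fwd_ne hl hremi T' hd hdm]
    show (g ⟨d.1, hdm⟩).1 = (T.1 d).1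
    show (T.1 ⟨d.1, hmemL ⟨d.1, hdm⟩⟩).1 = (T.1 d).1
    have hde : (⟨d.1, hmemL ⟨d.1, hdm⟩⟩ : {c : ℕ × ℕ // c ∈ shiftedCells l}) = d :=
      Subtype.ext rfl
    rw [hde]

lemma card_branch {l : List ℕ} (hl : IsSP l) (hne : l ≠ []) :
    Nat.card (STab l) = ∑ i ∈ Finset.range l.length,
      if Removable l i then Nat.card (STab (removeCell l i)) else 0 := by
  classical
  rw [← Nat.card_eq_of_bijective (G l hl) ⟨G_injective l hl, G_surjective l hl hne⟩]
  letI : ∀ x : {i : Fin l.length // Removable l i.1}, Fintype (STab (removeCell l x.1.1)) :=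
    fun x => Fintype.ofFinite _
  calc Nat.card (Σ x : {i : Fin l.length // Removable l i.1}, STab (removeCell l x.1.1))
      = ∑ x : {i : Fin l.length // Removable l i.1}, Nat.card (STab (removeCell l x.1.1)) := by
        rw [Nat.card_eq_fintype_card, Fintype.card_sigma]
        exact Finset.sum_congr rfl fun x _ => Nat.card_eq_fintype_card.symm
    _ = ∑ x ∈ Finset.univ.filter (fun i : Fin l.length => Removable l i.1),
          Nat.card (STab (removeCell l x.1)) :=
        (@Finset.sum_subtype (Fin l.length) ℕ _ (fun i => Removable l i.1) _
          (Finset.univ.filter (fun i : Fin l.length => Removable l i.1))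
          (fun x => by simp only [Finset.mem_filter, Finset.mem_univ, true_and])
          (fun i => Nat.card (STab (removeCell l i.1)))).symm
    _ = ∑ x : Fin l.length, if Removable l x.1 then Nat.card (STab (removeCell l x.1)) else 0 :=
        Finset.sum_filter _ _
    _ = ∑ i ∈ Finset.range l.length,
          if Removable l i then Nat.card (STab (removeCell l i)) else 0 :=
        Fin.sum_univ_eq_sum_range
          (fun k => if Removable l k then Nat.card (STab (removeCell l k)) else 0) l.length

open Classical in
/-- Edge multiplicity of the Schur graph: `2` if `λ` is obtained from `ν` by adding
one cell without changing the number of rows, `1` if the number of rows grows by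
one, `0` otherwise. -/
noncomputable def kappa (ν l : List ℕ) : ℕ :=
  if IsSP ν ∧ IsSP l ∧ shiftedCells ν ⊆ shiftedCells l ∧
      (shiftedCells l).card = (shiftedCells ν).card + 1 then
    (if ν.length = l.length then 2 else 1)
  else 0

lemma kappa_rm {l : List ℕ} {i : ℕ} (hl : IsSP l) (hrem : Removable l i) :
    kappa (removeCell l i) l = if l.getD i 0 = 1 then 1 else 2 := by
  have hsp := isSP_rm hl hrem
  have hc := cells_rm hl hrem
  have hmem := corner_mem hl.2 hrem.1
  have hsub : shiftedCells (removeCell l i) ⊆ shiftedCells l := by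
    rw [hc]; exact Finset.erase_subset _ _
  have hcard : (shiftedCells l).card = (shiftedCells (removeCell l i)).card + 1 := by
    rw [hc, Finset.card_erase_of_mem hmem]
    have : 0 < (shiftedCells l).card := Finset.card_pos.2 ⟨_, hmem⟩
    omega
  unfold kappa
  rw [if_pos ⟨hsp, hl, hsub, hcard⟩, rm_length hl.2 hrem]
  have hlen : 1 ≤ l.length := by have := hrem.1; omega
  by_cases h1 : l.getD i 0 = 1
  · rw [if_pos h1, if_pos h1, if_neg (by omega)]
  · rw [if_neg h1, if_neg h1, if_pos rfl]

lemma kappa_rm_zero {l : List ℕ} {i : ℕ} (hl : IsSP l) (hi : i < l.length)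
    (hnrem : ¬ Removable l i) : kappa (removeCell l i) l = 0 := by
  have key : i + 1 < l.length ∧ l.getD (i+1) 0 + 1 = l.getD i 0 := by
    have hpos := getD_pos hl.2 hi
    rcases Nat.lt_trichotomy (i+1) l.length with h | h | h
    · have := sorted_getD_lt hl.1 (show i < i+1 by omega) h
      constructor
      · exact h
      · by_contra hne
        exact hnrem ⟨hi, Or.inl (by omega)⟩
    · have h0 : l.getD (i+1) 0 = 0 := List.getD_eq_default _ _ (by omega)
      by_cases h1 : l.getD i 0 = 1
      · exact absurd ⟨hi, Or.inr ⟨h, h1⟩⟩ hnrem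
      · exact absurd ⟨hi, Or.inl (by omega)⟩ hnrem
    · omega
  have h2 : 2 ≤ l.getD i 0 := by
    have := getD_pos hl.2 key.1
    omega
  have hnsp : ¬ IsSP (removeCell l i) := by
    rintro ⟨hsort, -⟩
    rw [rm_eq_set hl.2 h2] at hsort
    have hlen : (l.set i (l.getD i 0 - 1)).length = l.length := List.length_set
    have := List.pairwise_iff_getElem.1 hsort i (i+1) (by omega) (by omega) (by omega)
    rw [List.getElem_set, List.getElem_set, if_pos rfl, if_neg (by omega)] at this
    have hg : l[i+1] = l.getD (i+1) 0 := (List.getD_eq_getElem l 0 key.1).symm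
    rw [hg] at this
    simp only [gt_iff_lt] at this
    omega
  unfold kappa
  rw [if_neg (fun hh => hnsp hh.1)]

lemma kappa_conds {ν l : List ℕ} (h : kappa ν l ≠ 0) :
    IsSP ν ∧ IsSP l ∧ shiftedCells ν ⊆ shiftedCells l ∧
      (shiftedCells l).card = (shiftedCells ν).card + 1 := by
  by_contra hC
  unfold kappa at h
  rw [if_neg hC] at h
  exact h rfl

lemma kappa_val {ν l : List ℕ} (h : kappa ν l ≠ 0) :
    kappa ν l = if ν.length = l.length then 2 else 1 := by
  have := kappa_conds h
  unfold kappa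
  rw [if_pos this]

/-- Number of paths (with edge multiplicity) of length `n` from `∅` to `l` in the
Schur graph. -/
noncomputable def schurG : ℕ → List ℕ → ℕ
  | 0, l => if l = [] then 1 else 0
  | n + 1, l => ∑ i ∈ Finset.range l.length,
      kappa (removeCell l i) l * schurG n (removeCell l i)

/-- `g_λ`, the number of paths from `∅` to `λ` in the Schur graph. -/
noncomputable def gP (l : List ℕ) : ℕ := schurG l.sum l

lemma g_eq (n : ℕ) : ∀ l : List ℕ, l.sum = n → IsSP l →
    gP l = 2 ^ (n - l.length) * Nat.card (STab l) := by
  induction n using Nat.strong_induction_on with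
  | _ n ih =>
    intro l hsum hl
    match n, hsum with
    | 0, hsum =>
      have hnil : l = [] := by
        cases l with
        | nil => rfl
        | cons a t =>
          exfalso
          have := hl.2 a (by simp)
          simp only [List.sum_cons] at hsum
          omega
      subst hnil
      rw [gP, card_STab_nil]
      norm_num [schurG]
    | m + 1, hsum =>
      have hne : l ≠ [] := by
        intro h
        subst h
        simp at hsum
      have hlen1 : 1 ≤ l.length := by
        cases l with
        | nil => exact absurd rfl hne
        | cons a t => simp
      have hlsum : l.length ≤ m + 1 := hsum ▸ length_le_sum hl.2
      have hgp : gP l = ∑ i ∈ Finset.range l.length,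
          kappa (removeCell l i) l * schurG m (removeCell l i) := by
        rw [gP, hsum]
        rfl
      rw [hgp, card_branch hl hne, Finset.mul_sum]
      refine Finset.sum_congr rfl fun i hi => ?_
      rw [Finset.mem_range] at hi
      by_cases hrem : Removable l i
      · have hsm : (removeCell l i).sum = m := by rw [rm_sum hl.2 hi]; omega
        have hg2 : schurG m (removeCell l i) = gP (removeCell l i) := by rw [gP, hsm]
        rw [hg2, kappa_rm hl hrem, if_pos hrem,
          ih m (by omega) (removeCell l i) hsm (isSP_rm hl hrem), rm_length hl.2 hrem]
        by_cases h1 : l.getD i 0 = 1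
        · rw [if_pos h1, if_pos h1, one_mul]
          congr 2
          omega
        · rw [if_neg h1, if_neg h1]
          have h2 : 2 ≤ l.getD i 0 := by have := getD_pos hl.2 hi; omega
          have hbig : l.length + 1 ≤ l.sum := by
            rw [← sum_getD]
            have hmem : i ∈ Finset.range l.length := Finset.mem_range.2 hi
            have hsplit : l.getD i 0 + ∑ j ∈ (Finset.range l.length).erase i, l.getD j 0 =
                ∑ j ∈ Finset.range l.length, l.getD j 0 :=
              Finset.add_sum_erase (Finset.range l.length) (fun j => l.getD j 0) hmem
            have h5 : ((Finset.range l.length).erase i).card • 1 ≤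
                ∑ j ∈ (Finset.range l.length).erase i, l.getD j 0 :=
              Finset.card_nsmul_le_sum _ _ _
                (fun x hx => getD_pos hl.2 (Finset.mem_range.1 (Finset.mem_of_mem_erase hx)))
            simp only [smul_eq_mul, mul_one] at h5
            have h4 : ((Finset.range l.length).erase i).card = l.length - 1 := by
              rw [Finset.card_erase_of_mem hmem, Finset.card_range]
            omega
          rw [← mul_assoc]
          congr 1
          rw [← pow_succ']
          congr 1
          omega
      · rw [kappa_rm_zero hl hi hrem, if_neg hrem, zero_mul, mul_zero]

lemma len_mono {ν l : List ℕ} (hν : IsSP ν) (hsub : shiftedCells ν ⊆ shiftedCells l) :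
    ν.length ≤ l.length := by
  rcases Nat.eq_zero_or_pos ν.length with h | h
  · omega
  · have hlt : ν.length - 1 < ν.length := by omega
    have hgd := getD_pos hν.2 hlt
    have hmem : (ν.length - 1, ν.length - 1) ∈ shiftedCells ν :=
      mem_shiftedCells.2 (show ν.length - 1 < ν.length ∧ ν.length - 1 ≤ ν.length - 1 ∧
        ν.length - 1 < ν.length - 1 + ν.getD (ν.length - 1) 0 by omega)
    have h2 : ν.length - 1 < l.length ∧ ν.length - 1 ≤ ν.length - 1 ∧
        ν.length - 1 < ν.length - 1 + l.getD (ν.length - 1) 0 :=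
      mem_shiftedCells.1 (hsub hmem)
    omega

lemma len_bound {ν l : List ℕ} (hν : IsSP ν) (hl : IsSP l)
    (hsub : shiftedCells ν ⊆ shiftedCells l)
    (hcard : (shiftedCells l).card = (shiftedCells ν).card + 1) :
    l.length ≤ ν.length + 1 := by
  by_contra hcon
  push_neg at hcon
  have hdom : ∀ j, j < ν.length → ν.getD j 0 ≤ l.getD j 0 := by
    intro j hj
    have hp := getD_pos hν.2 hj
    have hmem : (j, j + ν.getD j 0 - 1) ∈ shiftedCells ν := corner_mem hν.2 hj
    have h2 : j < l.length ∧ j ≤ j + ν.getD j 0 - 1 ∧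
        j + ν.getD j 0 - 1 < j + l.getD j 0 := mem_shiftedCells.1 (hsub hmem)
    omega
  have hsums : l.sum = ν.sum + 1 := by
    rw [← card_shiftedCells l, ← card_shiftedCells ν, hcard]
  have hsplit : ∑ j ∈ Finset.range ν.length, l.getD j 0 +
      ∑ j ∈ Finset.Ico ν.length l.length, l.getD j 0 =
      ∑ j ∈ Finset.range l.length, l.getD j 0 := by
    rw [Finset.range_eq_Ico, Finset.range_eq_Ico]
    exact Finset.sum_Ico_consecutive (fun j => l.getD j 0) (by omega : 0 ≤ ν.length) (by omega : ν.length ≤ l.length)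
  have h1 : ν.sum ≤ ∑ j ∈ Finset.range ν.length, l.getD j 0 := by
    rw [← sum_getD]
    exact Finset.sum_le_sum (fun j hj => hdom j (Finset.mem_range.1 hj))
  have h2 : 2 ≤ ∑ j ∈ Finset.Ico ν.length l.length, l.getD j 0 := by
    have hcard2 : (Finset.Ico ν.length l.length).card = l.length - ν.length :=
      Nat.card_Ico _ _
    have h3 : (Finset.Ico ν.length l.length).card • 1 ≤
        ∑ j ∈ Finset.Ico ν.length l.length, l.getD j 0 :=
      Finset.card_nsmul_le_sum _ _ _ (fun x hx => getD_pos hl.2 (Finset.mem_Ico.1 hx).2)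
    simp only [smul_eq_mul, mul_one] at h3
    omega
  have h4 := sum_getD l
  omega

/-- Down transition function of the Schur graph. -/
noncomputable def pDown (l ν : List ℕ) : ℚ := ((gP ν : ℚ) / (gP l : ℚ)) * (kappa ν l : ℚ)

/-- Up transition function of the Schur graph. -/
noncomputable def pUp (ν l : List ℕ) : ℚ := (gP l : ℚ) / ((gP ν : ℚ) * ((ν.sum : ℚ) + 1))

/-- Plancherel measure. -/
noncomputable def MPl (l : List ℕ) : ℚ :=
  (2 : ℚ) ^ ((l.length : ℤ) - (l.sum : ℤ)) * (gP l : ℚ) ^ 2 / (Nat.factorial l.sum : ℚ)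


/-- `δ(λ)`: the parity of the number of parts. -/
def deltaP (l : List ℕ) : ℕ := l.length % 2

/-- The branching multiplicity `[L^ν : Res L^λ]` of simple Sergeev supermodules:
`2^{(2+ℓ(ν)-δ(ν)-ℓ(λ)+δ(λ))/2}` when `λ` is obtained from `ν` by adding one cell,
and `0` otherwise. -/
noncomputable def branchMult (l ν : List ℕ) : ℕ :=
  if kappa ν l ≠ 0 then 2 ^ ((2 + ν.length + deltaP l - (deltaP ν + l.length)) / 2) else 0

/-- The dimension of the simple Sergeev `S_m`-supermodule indexed by a strict
partition `l` of `m`: `2^{m - (ℓ(λ)-δ(λ))/2} f_λ`. -/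
noncomputable def dimL (m : ℕ) (l : List ℕ) : ℕ :=
  2 ^ (m - (l.length - deltaP l) / 2) * Nat.card (STab l)

/-- for a strict partition `λ` of `n` and a strict partition `ν` of
`n-1`, the down transition function of the Schur graph satisfies
`p↓(λ,ν) = [L^ν : Res L^λ] · dim L^ν / dim L^λ`, where the branching multiplicity
and the dimensions of the simple Sergeev supermodules are as in the branching and
dimension theorems for Sergeev algebras. -/
theorem down_transition_eq_branching (n : ℕ) (hn : 1 ≤ n) (l ν : List ℕ)
    (hlam : IsStrictPartition l n) (hν : IsStrictPartition ν (n - 1)) :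
    pDown l ν = (branchMult l ν : ℚ) * (dimL (n - 1) ν : ℚ) / (dimL n l : ℚ) := by
  obtain ⟨hl, hlsum⟩ := hlam
  obtain ⟨hνsp, hνsum⟩ := hν
  by_cases hk : kappa ν l = 0
  · rw [pDown, branchMult, if_neg (fun h => h hk), hk]
    push_cast
    simp
  · obtain ⟨hνsp', hlsp', hsub, hcard⟩ := kappa_conds hk
    have hκval := kappa_val hk
    have hlenle := len_mono hνsp hsub
    have hlenb := len_bound hνsp hl hsub hcard
    have hglam := g_eq n l hlsum hl
    have hgnu := g_eq (n - 1) ν hνsum hνsp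
    have hνlen_le : ν.length ≤ n - 1 := hνsum ▸ length_le_sum hνsp.2
    have hllen_le : l.length ≤ n := hlsum ▸ length_le_sum hl.2
    rw [pDown, branchMult, if_pos hk, dimL, dimL, deltaP, deltaP, hglam, hgnu, hκval]
    set fν := Nat.card (STab ν) with hfνdef
    set fl2 := Nat.card (STab l) with hfl2def
    by_cases hfl20 : fl2 = 0
    · rw [hfl20]
      push_cast
      simp
    · have hfl2' : (fl2 : ℚ) ≠ 0 := Nat.cast_ne_zero.2 hfl20
      have hcase : l.length = ν.length ∨ l.length = ν.length + 1 := by omega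
      rcases hcase with hLL | hLL
      · rw [if_pos hLL.symm]
        have e1 : n - l.length = (n - 1 - ν.length) + 1 := by omega
        have e2 : n - (l.length - l.length % 2) / 2 =
            (n - 1 - (ν.length - ν.length % 2) / 2) + 1 := by
          rw [hLL]
          omega
        have e3 : (2 + ν.length + l.length % 2 - (ν.length % 2 + l.length)) / 2 = 1 := by
          omega
        rw [e1, e2, e3, pow_succ, pow_succ]
        push_cast
        have h2a : ((2 : ℚ) ^ (n - 1 - ν.length)) ≠ 0 := by positivity
        have h2c : ((2 : ℚ) ^ (n - 1 - (ν.length - ν.length % 2) / 2)) ≠ 0 := by positivity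
        field_simp
        ring
      · rw [if_neg (by omega)]
        have e1 : n - l.length = n - 1 - ν.length := by omega
        by_cases hpar : ν.length % 2 = 0
        · have e3 : (2 + ν.length + l.length % 2 - (ν.length % 2 + l.length)) / 2 = 1 := by
            omega
          have e2 : n - (l.length - l.length % 2) / 2 =
              (n - 1 - (ν.length - ν.length % 2) / 2) + 1 := by omega
          rw [e1, e2, e3, pow_succ]
          push_cast
          have h2a : ((2 : ℚ) ^ (n - 1 - ν.length)) ≠ 0 := by positivity
          have h2c : ((2 : ℚ) ^ (n - 1 - (ν.length - ν.length % 2) / 2)) ≠ 0 := by positivity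
          field_simp
          ring
        · have e3 : (2 + ν.length + l.length % 2 - (ν.length % 2 + l.length)) / 2 = 0 := by
            omega
          have e2 : n - (l.length - l.length % 2) / 2 =
              n - 1 - (ν.length - ν.length % 2) / 2 := by omega
          rw [e1, e2, e3, pow_zero]
          push_cast
          have h2a : ((2 : ℚ) ^ (n - 1 - ν.length)) ≠ 0 := by positivity
          have h2c : ((2 : ℚ) ^ (n - 1 - (ν.length - ν.length % 2) / 2)) ≠ 0 := by positivity
          field_simp
end
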